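/- Let 1 < p ≤ q, a ≥ 0, and set H(s) = s^p + a·s^q with H''(s) = p(p−1)s^{p−2} + a·q(q−1)s^{q−2}. Let A : ℝ^{N×n} → ℝ^{N×n} be differentiable and suppose that for all ξ, λ ∈ ℝ^{N×n} the ellipticity condition [DA(ξ)λ] : λ ≥ ν·H''(1+|ξ|)·|λ|² holds for some ν > 0, where DA(ξ) is the derivative of A at ξ. Then there exists ν̃ > 0 depending only on p, q, ν such that for all ξ₁, ξ₂ ∈ ℝ^{N×n}: (A(ξ₁) − A(ξ₂)) : (ξ₁ − ξ₂) ≥ ν̃·H''(1+|ξ₁|+|ξ₂|)·|ξ₁−ξ₂|². -/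

import Mathlib

open MeasureTheory Real Set
open scoped InnerProductSpace

/-- Second derivative `H''(s) = p(p−1)s^{p−2} + a·q(q−1)s^{q−2}` of the double phase
function `H(s) = s^p + a·s^q`. -/
noncomputable def dpH'' (p q a s : ℝ) : ℝ :=
  p * (p - 1) * s ^ (p - 2) + a * q * (q - 1) * s ^ (q - 2)

lemma rpow_quarter_bound (q α s t : ℝ) (hα : α ≤ q - 2) (hs : 0 < s)
    (h1 : s / 4 ≤ t) (h2 : t ≤ s) :
    min 1 ((4:ℝ) ^ (2 - q)) * s ^ α ≤ t ^ α := by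
  have ht : 0 < t := lt_of_lt_of_le (by positivity) h1
  rcases le_or_gt 0 α with h | h
  · have h4 : min 1 ((4:ℝ) ^ (2 - q)) ≤ (4:ℝ) ^ (-α) :=
      le_trans (min_le_right _ _)
        (Real.rpow_le_rpow_of_exponent_le (by norm_num) (by linarith))
    calc min 1 ((4:ℝ) ^ (2 - q)) * s ^ α ≤ (4:ℝ) ^ (-α) * s ^ α := by
          have : (0:ℝ) ≤ s ^ α := Real.rpow_nonneg hs.le α
          exact mul_le_mul_of_nonneg_right h4 this
      _ = (s / 4) ^ α := by
          rw [Real.div_rpow hs.le (by norm_num : (0:ℝ) ≤ 4), Real.rpow_neg (by norm_num)]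
          ring
      _ ≤ t ^ α := Real.rpow_le_rpow (by positivity) h1 h
  · have hs1 : (0:ℝ) ≤ s ^ α := Real.rpow_nonneg hs.le α
    calc min 1 ((4:ℝ) ^ (2 - q)) * s ^ α
        ≤ 1 * s ^ α := mul_le_mul_of_nonneg_right (min_le_left _ _) hs1
      _ = s ^ α := one_mul _
      _ ≤ t ^ α := Real.rpow_le_rpow_of_nonpos ht h2 h.le

lemma dpH''_nonneg (p q a s : ℝ) (hp : 1 < p) (hpq : p ≤ q) (ha : 0 ≤ a) (hs : 0 < s) :
    0 ≤ dpH'' p q a s := by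
  have h1 : (0:ℝ) ≤ s ^ (p - 2) := Real.rpow_nonneg hs.le _
  have h2 : (0:ℝ) ≤ s ^ (q - 2) := Real.rpow_nonneg hs.le _
  have hq : 1 < q := lt_of_lt_of_le hp hpq
  have h3 : (0:ℝ) ≤ p * (p - 1) := by nlinarith
  have h4 : (0:ℝ) ≤ a * q * (q - 1) := mul_nonneg (mul_nonneg ha (by linarith)) (by linarith)
  unfold dpH''
  nlinarith [mul_le_mul_of_nonneg_left h1 h3, mul_nonneg h3 h1, mul_nonneg h4 h2]

lemma dpH''_quarter (p q a s t : ℝ) (hp : 1 < p) (hpq : p ≤ q) (ha : 0 ≤ a)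
    (hs : 0 < s) (h1 : s / 4 ≤ t) (h2 : t ≤ s) :
    min 1 ((4:ℝ) ^ (2 - q)) * dpH'' p q a s ≤ dpH'' p q a t := by
  have hq : 1 < q := lt_of_lt_of_le hp hpq
  have hc1 : (0:ℝ) ≤ p * (p - 1) := by nlinarith
  have hc2 : (0:ℝ) ≤ a * q * (q - 1) := mul_nonneg (mul_nonneg ha (by linarith)) (by linarith)
  have b1 := rpow_quarter_bound q (p - 2) s t (by linarith) hs h1 h2
  have b2 := rpow_quarter_bound q (q - 2) s t (by linarith) hs h1 h2
  unfold dpH''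
  have e1 : p * (p - 1) * (min 1 ((4:ℝ) ^ (2 - q)) * s ^ (p - 2)) ≤ p * (p - 1) * t ^ (p - 2) :=
    mul_le_mul_of_nonneg_left b1 hc1
  have e2 : a * q * (q - 1) * (min 1 ((4:ℝ) ^ (2 - q)) * s ^ (q - 2)) ≤
      a * q * (q - 1) * t ^ (q - 2) := mul_le_mul_of_nonneg_left b2 hc2
  nlinarith [e1, e2]

lemma helper_mono (N n : ℕ) (p q ν : ℝ) (hp : 1 < p) (hpq : p ≤ q) (hν : 0 < ν)
    (a : ℝ) (ha : 0 ≤ a)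
    (A : EuclideanSpace ℝ (Fin N × Fin n) → EuclideanSpace ℝ (Fin N × Fin n))
    (hA : Differentiable ℝ A)
    (hell : ∀ ξ lam : EuclideanSpace ℝ (Fin N × Fin n),
      ν * dpH'' p q a (1 + ‖ξ‖) * ‖lam‖ ^ 2 ≤ ⟪(fderiv ℝ A ξ) lam, lam⟫_ℝ)
    (ξ₁ ξ₂ : EuclideanSpace ℝ (Fin N × Fin n)) (h12 : ‖ξ₂‖ ≤ ‖ξ₁‖) :
    ν * min 1 ((4:ℝ) ^ (2 - q)) / 4 * dpH'' p q a (1 + ‖ξ₁‖ + ‖ξ₂‖) * ‖ξ₁ - ξ₂‖ ^ 2 ≤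
      ⟪A ξ₁ - A ξ₂, ξ₁ - ξ₂⟫_ℝ := by
  set v := ξ₁ - ξ₂ with hv
  set γ : ℝ → EuclideanSpace ℝ (Fin N × Fin n) := fun t => ξ₂ + t • v with hγ
  set g : ℝ → ℝ := fun t => ⟪A (γ t), v⟫_ℝ with hg
  set g' : ℝ → ℝ := fun t => ⟪(fderiv ℝ A (γ t)) v, v⟫_ℝ with hg'
  set S : ℝ := 1 + ‖ξ₁‖ + ‖ξ₂‖ with hS
  have hS0 : 0 < S := by positivity
  have hγd : ∀ t : ℝ, HasDerivAt γ v t := by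
    intro t
    have h := ((hasDerivAt_id t).smul_const v).const_add ξ₂
    rw [one_smul] at h; exact h
  have hgd : ∀ t : ℝ, HasDerivAt g (g' t) t := by
    intro t
    have hc : HasDerivAt (fun t => A (γ t)) ((fderiv ℝ A (γ t)) v) t :=
      (hA (γ t)).hasFDerivAt.comp_hasDerivAt t (hγd t)
    have h2 : HasDerivAt (fun t => (innerSL ℝ v) (A (γ t)))
        ((innerSL ℝ v) ((fderiv ℝ A (γ t)) v)) t :=
      (innerSL ℝ v).hasFDerivAt.comp_hasDerivAt t hc
    have e : ∀ x : EuclideanSpace ℝ (Fin N × Fin n), (innerSL ℝ v) x = ⟪x, v⟫_ℝ := by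
      intro x; rw [innerSL_apply_apply]; exact (real_inner_comm v x).symm
    simp only [e] at h2
    exact h2
  have hg'lb : ∀ t : ℝ, ν * dpH'' p q a (1 + ‖γ t‖) * ‖v‖ ^ 2 ≤ g' t := fun t => hell (γ t) v
  have hg'0 : ∀ t : ℝ, 0 ≤ g' t := by
    intro t
    refine le_trans ?_ (hg'lb t)
    have := dpH''_nonneg p q a (1 + ‖γ t‖) hp hpq ha (by positivity)
    positivity
  have hmono : Monotone g := by
    refine monotone_of_deriv_nonneg (fun t => (hgd t).differentiableAt) ?_
    intro t
    rw [(hgd t).deriv]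
    exact hg'0 t
  set c : ℝ := min 1 ((4:ℝ) ^ (2 - q)) with hcdef
  set m : ℝ := ν * (c * dpH'' p q a S) * ‖v‖ ^ 2 with hm
  -- pointwise bound on [3/4, 1]
  have hkey : ∀ t ∈ Icc (3/4 : ℝ) 1, m ≤ g' t := by
    intro t ht
    obtain ⟨ht1, ht2⟩ := ht
    have hvle : ‖v‖ ≤ ‖ξ₁‖ + ‖ξ₂‖ := norm_sub_le _ _
    have hup : ‖γ t‖ ≤ ‖ξ₁‖ + ‖ξ₂‖ := by
      have he : γ t = (1 - t) • ξ₂ + t • ξ₁ := by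
        simp only [hγ, hv]; module
      rw [he]
      calc ‖(1 - t) • ξ₂ + t • ξ₁‖ ≤ ‖(1 - t) • ξ₂‖ + ‖t • ξ₁‖ := norm_add_le _ _
        _ = (1 - t) * ‖ξ₂‖ + t * ‖ξ₁‖ := by
            rw [norm_smul, norm_smul, Real.norm_eq_abs, Real.norm_eq_abs,
              abs_of_nonneg (by linarith), abs_of_nonneg (by linarith)]
        _ ≤ ‖ξ₁‖ + ‖ξ₂‖ := by nlinarith [norm_nonneg ξ₁, norm_nonneg ξ₂]
    have hlow : (‖ξ₁‖ + ‖ξ₂‖) / 4 ≤ ‖γ t‖ := by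
      have he : ξ₁ = γ t + (1 - t) • v := by
        simp only [hγ, hv]; module
      have h1 : ‖ξ₁‖ ≤ ‖γ t‖ + (1 - t) * ‖v‖ := by
        calc ‖ξ₁‖ = ‖γ t + (1 - t) • v‖ := by rw [← he]
          _ ≤ ‖γ t‖ + ‖(1 - t) • v‖ := norm_add_le _ _
          _ = ‖γ t‖ + (1 - t) * ‖v‖ := by
              rw [norm_smul, Real.norm_eq_abs, abs_of_nonneg (by linarith)]
      nlinarith [norm_nonneg v, norm_nonneg (γ t)]
    have hquarter : S / 4 ≤ 1 + ‖γ t‖ := by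
      simp only [hS]; linarith
    have hupS : 1 + ‖γ t‖ ≤ S := by simp only [hS]; linarith
    have hd := dpH''_quarter p q a S (1 + ‖γ t‖) hp hpq ha hS0 hquarter hupS
    refine le_trans ?_ (hg'lb t)
    rw [hm]
    have : ν * (c * dpH'' p q a S) ≤ ν * dpH'' p q a (1 + ‖γ t‖) :=
      mul_le_mul_of_nonneg_left hd hν.le
    exact mul_le_mul_of_nonneg_right this (by positivity)
  -- monotone of (g t - m t) on [3/4, 1]
  have hmid : m / 4 ≤ g 1 - g (3/4) := by
    set h : ℝ → ℝ := fun t => g t - m * t with hh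
    have hhd : ∀ t : ℝ, HasDerivAt h (g' t - m) t := by
      intro t
      have := (hgd t).sub ((hasDerivAt_id t).const_mul m)
      rw [mul_one] at this; exact this
    have hmono2 : MonotoneOn h (Icc (3/4 : ℝ) 1) := by
      refine monotoneOn_of_deriv_nonneg (convex_Icc _ _)
        (Continuous.continuousOn (by
          exact continuous_iff_continuousAt.2 fun t => (hhd t).continuousAt)) ?_ ?_
      · intro t ht
        exact (hhd t).differentiableAt.differentiableWithinAt
      · intro t ht
        rw [(hhd t).deriv]
        have ht' : t ∈ Icc (3/4 : ℝ) 1 := interior_subset ht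
        linarith [hkey t ht']
    have := hmono2 (by norm_num : (3/4:ℝ) ∈ Icc (3/4:ℝ) 1)
      (by norm_num : (1:ℝ) ∈ Icc (3/4:ℝ) 1) (by norm_num)
    simp only [hh] at this
    linarith
  have hfirst : g 0 ≤ g (3/4) := hmono (by norm_num)
  have hend : g 1 - g 0 = ⟪A ξ₁ - A ξ₂, ξ₁ - ξ₂⟫_ℝ := by
    have e1 : γ 1 = ξ₁ := by simp [hγ, hv]
    have e0 : γ 0 = ξ₂ := by simp [hγ]
    simp only [hg, e1, e0, ← hv]
    rw [inner_sub_left]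
  have : m / 4 ≤ ⟪A ξ₁ - A ξ₂, ξ₁ - ξ₂⟫_ℝ := by
    rw [← hend]; linarith
  refine le_trans (le_of_eq ?_) this
  rw [hm]
  ring


/-- **Monotonicity from ellipticity.** If `A : ℝ^{N×n} → ℝ^{N×n}` is differentiable and
`[DA(ξ)λ] : λ ≥ ν·H''(1+|ξ|)·|λ|²` for all `ξ, λ`, where `H(s) = s^p + a·s^q`
with `1 < p ≤ q`, `a ≥ 0`, then there is `ν̃ > 0` depending only on `p, q, ν` with
`(A(ξ₁) − A(ξ₂)) : (ξ₁ − ξ₂) ≥ ν̃·H''(1+|ξ₁|+|ξ₂|)·|ξ₁−ξ₂|²` for all `ξ₁, ξ₂`. -/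
theorem monotonicity_from_ellipticity (N n : ℕ) (p q ν : ℝ)
    (hp : 1 < p) (hpq : p ≤ q) (hν : 0 < ν) :
    ∃ ν' : ℝ, 0 < ν' ∧ ∀ a : ℝ, 0 ≤ a →
      ∀ A : EuclideanSpace ℝ (Fin N × Fin n) → EuclideanSpace ℝ (Fin N × Fin n),
        Differentiable ℝ A →
        (∀ ξ lam : EuclideanSpace ℝ (Fin N × Fin n),
          ν * dpH'' p q a (1 + ‖ξ‖) * ‖lam‖ ^ 2 ≤ ⟪(fderiv ℝ A ξ) lam, lam⟫_ℝ) →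
        ∀ ξ₁ ξ₂ : EuclideanSpace ℝ (Fin N × Fin n),
          ν' * dpH'' p q a (1 + ‖ξ₁‖ + ‖ξ₂‖) * ‖ξ₁ - ξ₂‖ ^ 2 ≤
            ⟪A ξ₁ - A ξ₂, ξ₁ - ξ₂⟫_ℝ := by
  refine ⟨ν * min 1 ((4:ℝ) ^ (2 - q)) / 4, ?_, ?_⟩
  · have : (0:ℝ) < min 1 ((4:ℝ) ^ (2 - q)) :=
      lt_min one_pos (Real.rpow_pos_of_pos (by norm_num) _)
    positivity
  · intro a ha A hA hell ξ₁ ξ₂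
    rcases le_total ‖ξ₂‖ ‖ξ₁‖ with h | h
    · exact helper_mono N n p q ν hp hpq hν a ha A hA hell ξ₁ ξ₂ h
    · have := helper_mono N n p q ν hp hpq hν a ha A hA hell ξ₂ ξ₁ h
      have e1 : ⟪A ξ₂ - A ξ₁, ξ₂ - ξ₁⟫_ℝ = ⟪A ξ₁ - A ξ₂, ξ₁ - ξ₂⟫_ℝ := by
        rw [show A ξ₂ - A ξ₁ = -(A ξ₁ - A ξ₂) by abel, show ξ₂ - ξ₁ = -(ξ₁ - ξ₂) by abel,
          inner_neg_neg]
      have e2 : ‖ξ₂ - ξ₁‖ = ‖ξ₁ - ξ₂‖ := norm_sub_rev _ _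
      have e3 : 1 + ‖ξ₂‖ + ‖ξ₁‖ = 1 + ‖ξ₁‖ + ‖ξ₂‖ := by ring
      rw [e1, e2, e3] at this
      exact this
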